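/- (Proposition 1, recursive paraunitary algorithm.) Let M ≥ 1, K ≥ 0, and let U⁽⁰⁾, U⁽¹⁾, …, U⁽ᴷ⁾ be M×M complex matrices each satisfying (U⁽ᵏ⁾)ᴴ·U⁽ᵏ⁾ = c_k·I with c_k > 0 real, and let D_m⁽ᵏ⁾ (k = 1,…,K; m = 0,…,M−1) be nonnegative integers. Fix r ∈ {0,…,M−1} and define recursively the families of sequences x_{k,m}^{(r)} : ℤ → ℂ (m = 0,…,M−1) by: x_{0,m}^{(r)}(n) = U⁽⁰⁾_{m,r} if n = 0 and 0 otherwise; and for k = 1,…,K, x_{k,m}^{(r)}(n) = ∑_{q=0}^{M−1} U⁽ᵏ⁾_{m,q} · x_{k−1,q}^{(r)}(n − D_q⁽ᵏ⁾). Then the M sequences x_{K,0}^{(r)}, …, x_{K,M−1}^{(r)} form a complementary set: for every nonzero integer k, ∑_{m=0}^{M−1} ∑_{n∈ℤ} x_{K,m}^{(r)}(n)·conj(x_{K,m}^{(r)}(n+k)) = 0. -/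

import Mathlib

open Matrix Function

private lemma supp_sum_finite {ι : Type*} (s : Finset ι) (f : ι → ℤ → ℂ)
    (h : ∀ i ∈ s, (support (f i)).Finite) :
    (support fun n => ∑ i ∈ s, f i n).Finite := by
  apply Set.Finite.subset (Set.Finite.biUnion s.finite_toSet h)
  intro n hn
  simp only [mem_support] at hn
  by_contra hc
  simp only [Set.mem_iUnion, mem_support, not_exists, not_not] at hc
  exact hn (Finset.sum_eq_zero fun i hi => by
    by_contra h0
    exact absurd (hc i hi) h0)

private lemma step_corr {M : ℕ} (U : Matrix (Fin M) (Fin M) ℂ) (c : ℝ)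
    (hU : U.conjTranspose * U = ((c : ℂ)) • (1 : Matrix (Fin M) (Fin M) ℂ))
    (D : Fin M → ℤ) (y : Fin M → ℤ → ℂ)
    (hfin : ∀ q, (support (y q)).Finite) (k : ℤ) :
    ∑ m : Fin M, ∑ᶠ n : ℤ,
        (∑ q : Fin M, U m q * y q (n - D q)) *
          (starRingEnd ℂ) (∑ q : Fin M, U m q * y q (n + k - D q)) =
      (c : ℂ) * ∑ q : Fin M, ∑ᶠ n : ℤ, y q n * (starRingEnd ℂ) (y q (n + k)) := by
  have hsupp : ∀ q q' : Fin M,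
      (support fun n : ℤ =>
        y q (n - D q) * (starRingEnd ℂ) (y q' (n + k - D q'))).Finite := by
    intro q q'
    apply Set.Finite.subset ((hfin q).image (fun t => t + D q))
    intro n hn
    simp only [mem_support] at hn
    have h1 : y q (n - D q) ≠ 0 := fun h => hn (by simp [h])
    exact ⟨n - D q, h1, by ring⟩
  -- expand the product
  have hexp : ∀ m : Fin M, ∀ n : ℤ,
      (∑ q : Fin M, U m q * y q (n - D q)) *
          (starRingEnd ℂ) (∑ q : Fin M, U m q * y q (n + k - D q)) =
        ∑ q : Fin M, ∑ q' : Fin M,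
          (U m q * (starRingEnd ℂ) (U m q')) *
            (y q (n - D q) * (starRingEnd ℂ) (y q' (n + k - D q'))) := by
    intro m n
    rw [map_sum, Finset.sum_mul_sum]
    exact Finset.sum_congr rfl fun q _ => Finset.sum_congr rfl fun q' _ => by
      rw [RingHom.map_mul]; ring
  have hinner : ∀ q q' : Fin M, ∀ m : Fin M,
      (support fun n : ℤ =>
        (U m q * (starRingEnd ℂ) (U m q')) *
          (y q (n - D q) * (starRingEnd ℂ) (y q' (n + k - D q')))).Finite := by
    intro q q' m
    apply Set.Finite.subset (hsupp q q')
    intro n hn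
    simp only [mem_support] at hn ⊢
    intro h
    exact hn (by rw [h, mul_zero])
  have hswap : ∀ m : Fin M,
      (∑ᶠ n : ℤ, ∑ q : Fin M, ∑ q' : Fin M,
          (U m q * (starRingEnd ℂ) (U m q')) *
            (y q (n - D q) * (starRingEnd ℂ) (y q' (n + k - D q')))) =
        ∑ q : Fin M, ∑ q' : Fin M,
          (U m q * (starRingEnd ℂ) (U m q')) *
            ∑ᶠ n : ℤ, (y q (n - D q) * (starRingEnd ℂ) (y q' (n + k - D q'))) := by
    intro m
    rw [finsum_sum_comm _ _ (fun q _ => supp_sum_finite _ _ (fun q' _ => hinner q q' m))]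
    refine Finset.sum_congr rfl fun q _ => ?_
    rw [finsum_sum_comm _ _ (fun q' _ => hinner q q' m)]
    exact Finset.sum_congr rfl fun q' _ => (mul_finsum _ _).symm
  have key : ∀ q q' : Fin M,
      (∑ m : Fin M, U m q * (starRingEnd ℂ) (U m q')) =
        if q' = q then (c : ℂ) else 0 := by
    intro q q'
    have h := congrFun (congrFun hU q') q
    simp only [Matrix.mul_apply, conjTranspose_apply, Matrix.smul_apply,
      Matrix.one_apply, smul_eq_mul, ← starRingEnd_apply] at h
    rw [show (∑ m : Fin M, U m q * (starRingEnd ℂ) (U m q')) =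
      ∑ m : Fin M, (starRingEnd ℂ) (U m q') * U m q from
        Finset.sum_congr rfl fun m _ => mul_comm _ _, h]
    split_ifs <;> simp
  calc
    ∑ m : Fin M, ∑ᶠ n : ℤ,
        (∑ q : Fin M, U m q * y q (n - D q)) *
          (starRingEnd ℂ) (∑ q : Fin M, U m q * y q (n + k - D q))
      = ∑ q : Fin M, ∑ q' : Fin M,
          (∑ m : Fin M, U m q * (starRingEnd ℂ) (U m q')) *
            ∑ᶠ n : ℤ, (y q (n - D q) * (starRingEnd ℂ) (y q' (n + k - D q'))) := by
        simp only [hexp]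
        rw [Finset.sum_congr rfl fun m _ => hswap m]
        rw [Finset.sum_comm]
        refine Finset.sum_congr rfl fun q _ => ?_
        rw [Finset.sum_comm]
        refine Finset.sum_congr rfl fun q' _ => ?_
        rw [Finset.sum_mul]
    _ = ∑ q : Fin M, (c : ℂ) *
          ∑ᶠ n : ℤ, (y q (n - D q) * (starRingEnd ℂ) (y q (n + k - D q))) := by
        refine Finset.sum_congr rfl fun q _ => ?_
        simp only [key, ite_mul, zero_mul]
        rw [Finset.sum_ite_eq' Finset.univ q]
        simp
    _ = (c : ℂ) * ∑ q : Fin M, ∑ᶠ n : ℤ, y q n * (starRingEnd ℂ) (y q (n + k)) := by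
        rw [Finset.mul_sum]
        refine Finset.sum_congr rfl fun q _ => ?_
        congr 1
        have he := finsum_comp_equiv (Equiv.subRight (D q))
          (f := fun t : ℤ => y q t * (starRingEnd ℂ) (y q (t + k)))
        rw [← he]
        refine finsum_congr fun n => ?_
        simp only [Equiv.subRight_apply]
        congr 2
        ring

/-- **Proposition 1.** The recursive paraunitary algorithm,
alternating delays and wide-sense unitary mixing steps starting from the
`r`-th column of `U⁽⁰⁾`, produces a complementary set of `M` sequences. -/
theorem recursive_paraunitary_algorithm
    (M K : ℕ) (hM : 1 ≤ M)
    (U : ℕ → Matrix (Fin M) (Fin M) ℂ) (c : ℕ → ℝ)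
    (hc : ∀ k, k ≤ K → 0 < c k)
    (hU : ∀ k, k ≤ K →
      (U k).conjTranspose * U k = ((c k : ℂ)) • (1 : Matrix (Fin M) (Fin M) ℂ))
    (D : ℕ → Fin M → ℕ) (r : Fin M)
    (x : ℕ → Fin M → ℤ → ℂ)
    (hx0 : ∀ m : Fin M, ∀ n : ℤ, x 0 m n = if n = 0 then U 0 m r else 0)
    (hxrec : ∀ k, 1 ≤ k → k ≤ K → ∀ m : Fin M, ∀ n : ℤ,
      x k m n = ∑ q : Fin M, U k m q * x (k - 1) q (n - (D k q : ℤ))) :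
    ∀ k : ℤ, k ≠ 0 →
      ∑ m : Fin M, ∑ᶠ n : ℤ, x K m n * (starRingEnd ℂ) (x K m (n + k)) = 0 := by
  have main : ∀ j, j ≤ K → (∀ m, (support (x j m)).Finite) ∧
      (∀ k : ℤ, k ≠ 0 →
        ∑ m : Fin M, ∑ᶠ n : ℤ, x j m n * (starRingEnd ℂ) (x j m (n + k)) = 0) := by
    intro j
    induction j with
    | zero =>
      intro _
      constructor
      · intro m
        apply Set.Finite.subset (Set.finite_singleton (0 : ℤ))
        intro n hn
        simp only [mem_support, hx0] at hn
        by_contra h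
        simp only [Set.mem_singleton_iff] at h
        rw [if_neg h] at hn
        exact hn rfl
      · intro k hk
        refine Finset.sum_eq_zero fun m _ => ?_
        have hz : ∀ n : ℤ, x 0 m n * (starRingEnd ℂ) (x 0 m (n + k)) = 0 := by
          intro n
          rw [hx0, hx0]
          by_cases hn : n = 0
          · have : n + k ≠ 0 := by omega
            rw [if_neg this]
            simp
          · rw [if_neg hn]
            simp
        rw [finsum_congr hz]
        exact finsum_zero
    | succ j ih =>
      intro hj
      have hj' : j ≤ K := Nat.le_of_succ_le hj
      obtain ⟨hfin, hcorr⟩ := ih hj'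
      have hx' : ∀ m : Fin M, ∀ n : ℤ,
          x (j + 1) m n = ∑ q : Fin M, U (j + 1) m q * x j q (n - (D (j + 1) q : ℤ)) := by
        intro m n
        simpa using hxrec (j + 1) (Nat.le_add_left 1 j) hj m n
      constructor
      · intro m
        have : support (x (j + 1) m) =
            support (fun n => ∑ q : Fin M, U (j + 1) m q * x j q (n - (D (j + 1) q : ℤ))) := by
          ext n; simp [mem_support, hx' m n]
        rw [this]
        refine supp_sum_finite _ _ fun q _ => ?_
        apply Set.Finite.subset ((hfin q).image (fun t => t + (D (j + 1) q : ℤ)))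
        intro n hn
        simp only [mem_support] at hn
        have h1 : x j q (n - (D (j + 1) q : ℤ)) ≠ 0 := fun h => hn (by simp [h])
        exact ⟨n - (D (j + 1) q : ℤ), h1, by ring⟩
      · intro k hk
        have hstep := step_corr (U (j + 1)) (c (j + 1)) (hU (j + 1) hj)
          (fun q => (D (j + 1) q : ℤ)) (x j) hfin k
        calc
          ∑ m : Fin M, ∑ᶠ n : ℤ, x (j + 1) m n * (starRingEnd ℂ) (x (j + 1) m (n + k))
            = ∑ m : Fin M, ∑ᶠ n : ℤ,
                (∑ q : Fin M, U (j + 1) m q * x j q (n - (D (j + 1) q : ℤ))) *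
                  (starRingEnd ℂ)
                    (∑ q : Fin M, U (j + 1) m q * x j q (n + k - (D (j + 1) q : ℤ))) := by
              refine Finset.sum_congr rfl fun m _ => finsum_congr fun n => ?_
              rw [hx' m n, hx' m (n + k)]
          _ = (c (j + 1) : ℂ) *
                ∑ q : Fin M, ∑ᶠ n : ℤ, x j q n * (starRingEnd ℂ) (x j q (n + k)) := hstep
          _ = 0 := by rw [hcorr k hk, mul_zero]
  exact (main K le_rfl).2
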